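/- arXiv:1602.02464 — 6 statements merged into one kernel-verified Lean document; each statement's English description precedes it below -/
import Mathlib

section
/- If α and β are angles for the initial and terminal directions e_γ(a) and e_γ(b) of a regular curve γ, then i_γ ∈ (β−α)/(2π) + ℤ and j_γ ∈ (β+α)/(2π) + ℤ. In particular, i_γ is an integer when e_γ(a) = e_γ(b), and j_γ is an integer when e_γ(a) and e_γ(b) are reflections of each other in a horizontal line. -/
open Real Set

noncomputable section

abbrev E2 : Type := EuclideanSpace ℝ (Fin 2)

def vec2 (x y : ℝ) : E2 := WithLp.toLp 2 ![x, y]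

def IsAngleFunction (a b : ℝ) (v : ℝ → E2) (θ : ℝ → ℝ) : Prop :=
  ContinuousOn θ (Icc a b) ∧
    ∀ u ∈ Icc a b, ‖v u‖⁻¹ • v u = vec2 (Real.cos (θ u)) (Real.sin (θ u))

lemma vec2_inj {x y x' y' : ℝ} (h : vec2 x y = vec2 x' y') : x = x' ∧ y = y' := by
  constructor
  · exact congrFun (congrArg WithLp.ofLp h) 0
  · exact congrFun (congrArg WithLp.ofLp h) 1

lemma angle_exists {x y : ℝ} (hc : Real.cos x = Real.cos y) (hs : Real.sin x = Real.sin y) :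
    ∃ k : ℤ, x = y + 2 * π * k := by
  have := Real.Angle.angle_eq_iff_two_pi_dvd_sub.mp (Real.Angle.cos_sin_inj hc hs)
  obtain ⟨k, hk⟩ := this
  exact ⟨k, by linarith⟩

/-- if `α` and `β` are angles for the initial and terminal directions
`e_γ(a)` and `e_γ(b)` of a regular curve `γ`, then `i_γ ∈ (β−α)/(2π) + ℤ` and
`j_γ ∈ (β+α)/(2π) + ℤ`.  In particular, `i_γ ∈ ℤ` if `e_γ(a) = e_γ(b)`, and
`j_γ ∈ ℤ` if `e_γ(a)` and `e_γ(b)` are reflections of each other in a horizontal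
line. -/
theorem i_index_j_index_mem (a b : ℝ) (hab : a ≤ b) (γ v : ℝ → E2)
    (hderiv : ∀ u ∈ Icc a b, HasDerivAt γ (v u) u)
    (hcont : ContinuousOn v (Icc a b))
    (hne : ∀ u ∈ Icc a b, v u ≠ 0)
    (θ : ℝ → ℝ) (hθ : IsAngleFunction a b v θ)
    (α β : ℝ)
    (hα : ‖v a‖⁻¹ • v a = vec2 (Real.cos α) (Real.sin α))
    (hβ : ‖v b‖⁻¹ • v b = vec2 (Real.cos β) (Real.sin β)) :
    (∃ k : ℤ, (θ b - θ a) / (2 * π) = (β - α) / (2 * π) + k) ∧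
    (∃ k : ℤ, (θ b + θ a) / (2 * π) = (β + α) / (2 * π) + k) ∧
    (‖v a‖⁻¹ • v a = ‖v b‖⁻¹ • v b → ∃ k : ℤ, (θ b - θ a) / (2 * π) = k) ∧
    (‖v b‖⁻¹ • v b = vec2 (Real.cos α) (-Real.sin α) →
      ∃ k : ℤ, (θ b + θ a) / (2 * π) = k) := by
  have ha : a ∈ Icc a b := ⟨le_refl a, hab⟩
  have hb : b ∈ Icc a b := ⟨hab, le_refl b⟩
  have hπ : (2 * π) ≠ 0 := by positivity
  have hA := vec2_inj ((hθ.2 a ha).symm.trans hα)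
  have hB := vec2_inj ((hθ.2 b hb).symm.trans hβ)
  obtain ⟨m, hm⟩ := angle_exists hA.1 hA.2
  obtain ⟨n, hn⟩ := angle_exists hB.1 hB.2
  refine ⟨⟨n - m, ?_⟩, ⟨n + m, ?_⟩, ?_, ?_⟩
  · push_cast; field_simp; linarith
  · push_cast; field_simp; linarith
  · intro h
    have h2 := vec2_inj ((hα.symm.trans h).trans hβ)
    obtain ⟨p, hp⟩ := angle_exists h2.1.symm h2.2.symm
    refine ⟨n - m + p, ?_⟩
    push_cast; field_simp; linarith
  · intro h
    have h2 := vec2_inj ((hβ.symm.trans h))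
    have hc : Real.cos β = Real.cos (-α) := by rw [Real.cos_neg]; exact h2.1
    have hs : Real.sin β = Real.sin (-α) := by rw [Real.sin_neg]; exact h2.2
    obtain ⟨p, hp⟩ := angle_exists hc hs
    refine ⟨n + m + p, ?_⟩
    push_cast; field_simp; linarith
end
end

section
/- If {σ_t : [a,b] → ℝ²}, 0 ≤ t ≤ 1, is a regular homotopy (each σ_t regular and the velocity v_{σ_t}(u) continuous in (t,u)), then t ↦ i_{σ_t} ∈ ℝ is continuous, and t ↦ j_{σ_t} + 2ℤ ∈ ℝ/2ℤ is continuous. -/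
open Real Set

noncomputable section

lemma two_pi_int_abs (m k : ℤ) :
    |2*π*m - 2*π*k| = 2*π*|(m:ℝ) - k| := by
  rw [show 2*π*(m:ℝ) - 2*π*k = 2*π*((m:ℝ)-k) by ring, abs_mul,
    abs_of_pos (by positivity : (0:ℝ) < 2*π)]

lemma angle_close_of_cos_lt {x δ : ℝ} (hδ0 : 0 < δ) (hδπ : δ ≤ π)
    (h : Real.cos δ < Real.cos x) : ∃ m : ℤ, |x - 2*π*m| < δ := by
  refine ⟨round (x / (2*π)), ?_⟩
  set m := round (x / (2*π)) with hm
  have h2π : (0:ℝ) < 2*π := by positivity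
  have h1 : |x / (2*π) - m| ≤ 1/2 := abs_sub_round _
  have heq : |x - 2*π*m| = 2*π * |x/(2*π) - m| := by
    rw [show x - 2*π*m = 2*π*(x/(2*π) - m) by field_simp, abs_mul, abs_of_pos h2π]
  have h2 : |x - 2*π*m| ≤ π := by rw [heq]; nlinarith [pi_pos]
  have hcos : Real.cos (x - 2*π*m) = Real.cos x := by
    have := Real.cos_sub_int_mul_two_pi x m
    rw [← this]; ring_nf
  by_contra hcon
  push_neg at hcon
  have h3 : Real.cos |x - 2*π*m| ≤ Real.cos δ := by
    rcases eq_or_lt_of_le hcon with h4 | h4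
    · rw [← h4]
    · exact le_of_lt (Real.strictAntiOn_cos ⟨hδ0.le, hδπ⟩ ⟨abs_nonneg _, h2⟩ h4)
  rw [Real.cos_abs, hcos] at h3; linarith

lemma coord_dist_le (x y : E2) (i : Fin 2) : dist (x i) (y i) ≤ dist x y := by
  rw [EuclideanSpace.dist_eq]
  have h1 : dist (x i) (y i) = Real.sqrt (dist (x i) (y i) ^ 2) :=
    (Real.sqrt_sq dist_nonneg).symm
  rw [h1]
  apply Real.sqrt_le_sqrt
  exact Finset.single_le_sum (f := fun j => dist (x j) (y j) ^ 2)
    (fun j _ => by positivity) (Finset.mem_univ i)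

lemma exists_uniform_int {a b δ : ℝ} (hab : a ≤ b) (hδπ : δ < π) {g : ℝ → ℝ}
    (hg : ContinuousOn g (Icc a b))
    (h : ∀ u ∈ Icc a b, ∃ m : ℤ, |g u - 2*π*m| < δ) :
    ∃ k : ℤ, ∀ u ∈ Icc a b, |g u - 2*π*k| < δ := by
  have ha : a ∈ Icc a b := ⟨le_refl a, hab⟩
  obtain ⟨k, hk⟩ := h a ha
  refine ⟨k, ?_⟩
  haveI : PreconnectedSpace (Icc a b) := Subtype.preconnectedSpace isPreconnected_Icc
  set G : Icc a b → ℝ := fun x => |g x.1 - 2*π*k| with hG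
  have hGc : Continuous G := by
    have : Continuous fun x : Icc a b => g x.1 := hg.restrict
    continuity
  have hiff : ∀ x : Icc a b, G x ≤ δ → G x < δ := by
    intro x hx
    obtain ⟨m, hm⟩ := h x.1 x.2
    have hmk : m = k := by
      by_contra hne
      have h1 : (1:ℝ) ≤ |(m:ℝ) - k| := by
        exact_mod_cast Int.one_le_abs (sub_ne_zero.mpr hne)
      have h2 : |2*π*m - 2*π*k| ≤ |g x.1 - 2*π*m| + |g x.1 - 2*π*k| := by
        calc |2*π*(m:ℝ) - 2*π*k| = |(g x.1 - 2*π*k) - (g x.1 - 2*π*m)| := by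
              congr 1; ring
        _ ≤ |g x.1 - 2*π*k| + |g x.1 - 2*π*m| := abs_sub _ _
        _ = |g x.1 - 2*π*m| + |g x.1 - 2*π*k| := by ring
      rw [two_pi_int_abs] at h2
      have hGx : |g x.1 - 2*π*k| ≤ δ := hx
      nlinarith [pi_pos]
    show |g x.1 - 2*π*(k:ℤ)| < δ
    rw [← hmk]; exact hm
  set S : Set (Icc a b) := {x | G x < δ} with hS
  have hopen : IsOpen S := isOpen_lt hGc continuous_const
  have hclosed : IsClosed S := by
    have hSeq : S = {x | G x ≤ δ} := by
      ext x
      simp only [hS, mem_setOf_eq]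
      exact ⟨le_of_lt, hiff x⟩
    rw [hSeq]
    exact isClosed_le hGc continuous_const
  have hne : S.Nonempty := ⟨⟨a, ha⟩, hk⟩
  have huniv := (IsClopen.eq_univ ⟨hclosed, hopen⟩ hne : S = univ)
  intro u hu
  have : (⟨u, hu⟩ : Icc a b) ∈ S := huniv ▸ mem_univ _
  exact this


lemma key_lemma (a b : ℝ) (hab : a ≤ b) (v : ℝ → ℝ → E2)
    (hcont : ContinuousOn (fun p : ℝ × ℝ => v p.1 p.2) (Icc (0:ℝ) 1 ×ˢ Icc a b))
    (hne : ∀ t ∈ Icc (0:ℝ) 1, ∀ u ∈ Icc a b, v t u ≠ 0)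
    (θ : ℝ → ℝ → ℝ)
    (hθ : ∀ t ∈ Icc (0:ℝ) 1, IsAngleFunction a b (v t) (θ t))
    (t₀ : ℝ) (ht₀ : t₀ ∈ Icc (0:ℝ) 1) (δ : ℝ) (hδ0 : 0 < δ) (hδπ : δ ≤ π/2) :
    ∃ η > 0, ∀ t ∈ Icc (0:ℝ) 1, |t - t₀| < η →
      ∃ k : ℤ, ∀ u ∈ Icc a b, |(θ t u - θ t₀ u) - 2*π*k| < δ := by
  have hπ := pi_pos
  set K : Set (ℝ × ℝ) := Icc (0:ℝ) 1 ×ˢ Icc a b with hK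
  set w : ℝ × ℝ → E2 := fun p => ‖v p.1 p.2‖⁻¹ • v p.1 p.2 with hw
  have hwc : ContinuousOn w K := by
    have h1 : ContinuousOn (fun p : ℝ × ℝ => ‖v p.1 p.2‖⁻¹) K := (hcont.norm).inv₀ fun p hp =>
        norm_ne_zero_iff.mpr (hne p.1 hp.1 p.2 hp.2)
    exact h1.smul hcont
  have hKc : IsCompact K := isCompact_Icc.prod isCompact_Icc
  have huc := hKc.uniformContinuousOn_of_continuous hwc
  rw [Metric.uniformContinuousOn_iff] at huc
  set ε : ℝ := (1 - Real.cos δ)/2 with hε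
  have hcosδ : Real.cos δ < 1 := by
    have := Real.strictAntiOn_cos ⟨le_refl 0, pi_pos.le⟩
      (⟨hδ0.le, by linarith⟩ : δ ∈ Icc 0 π) hδ0
    rwa [Real.cos_zero] at this
  have hε0 : 0 < ε := by rw [hε]; linarith
  obtain ⟨η, hη0, hucη⟩ := huc (ε/2) (by linarith)
  refine ⟨η, hη0, ?_⟩
  intro t ht hdist
  have hwb : ∀ u ∈ Icc a b, dist (w (t, u)) (w (t₀, u)) < ε/2 := by
    intro u hu
    apply hucη (t, u) ⟨ht, hu⟩ (t₀, u) ⟨ht₀, hu⟩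
    rw [Prod.dist_eq]
    simp only [dist_self]
    rw [Real.dist_eq]
    exact max_lt hdist hη0
  have hcb : ∀ u ∈ Icc a b, Real.cos δ < Real.cos (θ t u - θ t₀ u) := by
    intro u hu
    have e1 : w (t, u) = vec2 (Real.cos (θ t u)) (Real.sin (θ t u)) :=
      (hθ t ht).2 u hu
    have e2 : w (t₀, u) = vec2 (Real.cos (θ t₀ u)) (Real.sin (θ t₀ u)) :=
      (hθ t₀ ht₀).2 u hu
    have d0 : dist (w (t, u) 0) (w (t₀, u) 0) < ε/2 :=
      lt_of_le_of_lt (coord_dist_le _ _ 0) (hwb u hu)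
    have d1 : dist (w (t, u) 1) (w (t₀, u) 1) < ε/2 :=
      lt_of_le_of_lt (coord_dist_le _ _ 1) (hwb u hu)
    rw [e1, e2] at d0 d1
    have v0 : ∀ x y : ℝ, vec2 x y 0 = x := fun x y => by simp [vec2]
    have v1 : ∀ x y : ℝ, vec2 x y 1 = y := fun x y => by simp [vec2]
    rw [v0, v0, Real.dist_eq] at d0
    rw [v1, v1, Real.dist_eq] at d1
    rw [Real.cos_sub]
    obtain ⟨d0l, d0r⟩ := abs_lt.mp d0
    obtain ⟨d1l, d1r⟩ := abs_lt.mp d1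
    have p1 := Real.sin_sq_add_cos_sq (θ t₀ u)
    have c0 := Real.neg_one_le_cos (θ t₀ u)
    have c1 := Real.cos_le_one (θ t₀ u)
    have s0 := Real.neg_one_le_sin (θ t₀ u)
    have s1 := Real.sin_le_one (θ t₀ u)
    nlinarith [mul_nonneg (by linarith : (0:ℝ) ≤ ε/2 - (Real.cos (θ t u) - Real.cos (θ t₀ u))) (by linarith : (0:ℝ) ≤ 1 - Real.cos (θ t₀ u)),
      mul_nonneg (by linarith : (0:ℝ) ≤ ε/2 + (Real.cos (θ t u) - Real.cos (θ t₀ u))) (by linarith : (0:ℝ) ≤ 1 + Real.cos (θ t₀ u)),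
      mul_nonneg (by linarith : (0:ℝ) ≤ ε/2 - (Real.sin (θ t u) - Real.sin (θ t₀ u))) (by linarith : (0:ℝ) ≤ 1 - Real.sin (θ t₀ u)),
      mul_nonneg (by linarith : (0:ℝ) ≤ ε/2 + (Real.sin (θ t u) - Real.sin (θ t₀ u))) (by linarith : (0:ℝ) ≤ 1 + Real.sin (θ t₀ u))]
  apply exists_uniform_int hab (by linarith : δ < π)
  · exact ((hθ t ht).1).sub ((hθ t₀ ht₀).1)
  · intro u hu
    exact angle_close_of_cos_lt hδ0 (by linarith) (hcb u hu)


/-- if `{σ_t : [a,b] → ℝ²}`, `0 ≤ t ≤ 1`, is a regular homotopy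
(each `σ_t` is a regular curve and the velocity `v_{σ_t}(u)` is jointly continuous
in `(t,u)`), then `t ↦ i_{σ_t} ∈ ℝ` is continuous and
`t ↦ j_{σ_t} + 2ℤ ∈ ℝ/2ℤ` is continuous; here the indices are computed from any
choice of angle functions `θ_t` for the curves `σ_t`. -/
theorem i_index_j_index_continuous_of_regular_homotopy
    (a b : ℝ) (hab : a ≤ b) (σ v : ℝ → ℝ → E2)
    (hderiv : ∀ t ∈ Icc (0:ℝ) 1, ∀ u ∈ Icc a b, HasDerivAt (σ t) (v t u) u)
    (hcont : ContinuousOn (fun p : ℝ × ℝ => v p.1 p.2) (Icc (0:ℝ) 1 ×ˢ Icc a b))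
    (hne : ∀ t ∈ Icc (0:ℝ) 1, ∀ u ∈ Icc a b, v t u ≠ 0)
    (θ : ℝ → ℝ → ℝ)
    (hθ : ∀ t ∈ Icc (0:ℝ) 1, IsAngleFunction a b (v t) (θ t)) :
    ContinuousOn (fun t => (θ t b - θ t a) / (2 * π)) (Icc (0:ℝ) 1) ∧
    ContinuousOn
      (fun t => (((θ t b + θ t a) / (2 * π) : ℝ) : AddCircle (2:ℝ)))
      (Icc (0:ℝ) 1) := by
  have hπ := pi_pos
  have hb : b ∈ Icc a b := ⟨hab, le_refl b⟩
  have ha : a ∈ Icc a b := ⟨le_refl a, hab⟩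
  constructor
  · intro t₀ ht₀
    rw [Metric.continuousWithinAt_iff]
    intro ε hε
    set δ : ℝ := min (π/2) (ε*π/2) with hδ
    have hδ0 : 0 < δ := lt_min (by linarith) (by positivity)
    obtain ⟨η, hη0, hη⟩ := key_lemma a b hab v hcont hne θ hθ t₀ ht₀ δ hδ0
      (min_le_left _ _)
    refine ⟨η, hη0, ?_⟩
    intro t ht hd
    rw [Real.dist_eq] at hd
    obtain ⟨k, hk⟩ := hη t ht hd
    have hkb := hk b hb
    have hka := hk a ha
    rw [Real.dist_eq]
    have e : (θ t b - θ t a)/(2*π) - (θ t₀ b - θ t₀ a)/(2*π) =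
        (((θ t b - θ t₀ b) - 2*π*k) - ((θ t a - θ t₀ a) - 2*π*k))/(2*π) := by
      ring
    rw [e, abs_div, abs_of_pos (by positivity : (0:ℝ) < 2*π), div_lt_iff₀ (by positivity : (0:ℝ) < 2*π)]
    have habs := abs_sub ((θ t b - θ t₀ b) - 2*π*k) ((θ t a - θ t₀ a) - 2*π*k)
    have hδε : δ ≤ ε*π/2 := min_le_right _ _
    nlinarith
  · intro t₀ ht₀
    rw [Metric.continuousWithinAt_iff]
    intro ε hε
    set δ : ℝ := min (π/2) (ε*π/2) with hδ
    have hδ0 : 0 < δ := lt_min (by linarith) (by positivity)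
    obtain ⟨η, hη0, hη⟩ := key_lemma a b hab v hcont hne θ hθ t₀ ht₀ δ hδ0
      (min_le_left _ _)
    refine ⟨η, hη0, ?_⟩
    intro t ht hd
    rw [Real.dist_eq] at hd
    obtain ⟨k, hk⟩ := hη t ht hd
    have hkb := hk b hb
    have hka := hk a ha
    have h2k : (((2*k : ℝ)) : AddCircle (2:ℝ)) = 0 := by
      rw [AddCircle.coe_eq_zero_iff]
      exact ⟨k, by rw [zsmul_eq_mul]; push_cast; ring⟩
    have ecoe : (((θ t b + θ t a) / (2*π) : ℝ) : AddCircle (2:ℝ)) -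
        (((θ t₀ b + θ t₀ a) / (2*π) : ℝ) : AddCircle (2:ℝ)) =
        (((θ t b + θ t a) / (2*π) - (θ t₀ b + θ t₀ a) / (2*π) - 2*k : ℝ) : AddCircle (2:ℝ)) := by
      rw [AddCircle.coe_sub, AddCircle.coe_sub, h2k, sub_zero]
    have hlip : dist ((((θ t b + θ t a) / (2*π) : ℝ)) : AddCircle (2:ℝ))
        ((((θ t₀ b + θ t₀ a) / (2*π) : ℝ)) : AddCircle (2:ℝ)) ≤
        |(θ t b + θ t a) / (2*π) - (θ t₀ b + θ t₀ a) / (2*π) - 2*k| := by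
      rw [dist_eq_norm, ecoe]
      have := QuotientAddGroup.norm_mk_le_norm (S := AddSubgroup.zmultiples (2:ℝ))
        (m := (θ t b + θ t a) / (2*π) - (θ t₀ b + θ t₀ a) / (2*π) - 2*k)
      simpa [Real.norm_eq_abs] using this
    apply lt_of_le_of_lt hlip
    have e : (θ t b + θ t a) / (2*π) - (θ t₀ b + θ t₀ a) / (2*π) - 2*k =
        (((θ t b - θ t₀ b) - 2*π*k) + ((θ t a - θ t₀ a) - 2*π*k))/(2*π) := by
      field_simp
      ring
    rw [e, abs_div, abs_of_pos (by positivity : (0:ℝ) < 2*π), div_lt_iff₀ (by positivity : (0:ℝ) < 2*π)]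
    have habs := abs_add_le ((θ t b - θ t₀ b) - 2*π*k) ((θ t a - θ t₀ a) - 2*π*k)
    have hδε : δ ≤ ε*π/2 := min_le_right _ _
    nlinarith
end
end

section
/- If {σ_t} is a regular homotopy between regular curves σ_0 and σ_1 in ℝ² which fixes the endpoints and the end directions (σ_t(a), σ_t(b), e_{σ_t}(a), e_{σ_t}(b) are independent of t), then i_{σ_0} = i_{σ_1}. -/
open Real Set

noncomputable section

/-- A continuous integer-valued function on a preconnected set is constant. -/
lemma aux_int_const {s : Set ℝ} (hs : IsPreconnected s) {f : ℝ → ℝ}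
    (hf : ContinuousOn f s) (h : ∀ x ∈ s, ∃ n : ℤ, f x = n)
    {x y : ℝ} (hx : x ∈ s) (hy : y ∈ s) : f x = f y := by
  obtain ⟨n, hn⟩ := h x hx
  obtain ⟨m, hm⟩ := h y hy
  by_contra hne
  have key : ∀ (p q : ℝ) (_ : p ∈ s) (_ : q ∈ s) (np nq : ℤ),
      f p = np → f q = nq → f p < f q → False := by
    intro p q hp hq np nq hnp hnq hlt
    have hnm : (np : ℝ) < nq := by rw [← hnp, ← hnq]; exact hlt
    have hval : ((np : ℝ) + 1/2) ∈ Icc (f p) (f q) := by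
      constructor
      · rw [hnp]; linarith
      · rw [hnq]
        have : (np : ℤ) + 1 ≤ nq := by exact_mod_cast hnm
        have : ((np : ℝ) + 1 : ℝ) ≤ nq := by exact_mod_cast this
        linarith
    obtain ⟨z, hz, hfz⟩ := hs.intermediate_value hp hq hf hval
    obtain ⟨k, hk⟩ := h z hz
    rw [hk] at hfz
    have h2 : (2 * k : ℝ) = 2 * np + 1 := by linarith
    have h3 : (2 * k : ℤ) = 2 * np + 1 := by exact_mod_cast h2
    omega
  rcases lt_or_gt_of_ne hne with hlt | hlt
  · exact key x y hx hy n m hn hm hlt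
  · exact key y x hy hx m n hm hn hlt

/-- Two continuous "angle lifts" of the same circle-valued map on `[a,b]` have
equal end differences. -/
lemma aux_diff_eq (a b : ℝ) (hab : a ≤ b) (c : ℝ → ℂ) (θ θ' : ℝ → ℝ)
    (hθ : ContinuousOn θ (Icc a b)) (hθ' : ContinuousOn θ' (Icc a b))
    (h1 : ∀ u ∈ Icc a b, c u = Complex.exp (θ u * Complex.I))
    (h2 : ∀ u ∈ Icc a b, c u = Complex.exp (θ' u * Complex.I)) :
    θ b - θ a = θ' b - θ' a := by
  have key : ∀ u ∈ Icc a b, ∃ n : ℤ, (θ u - θ' u) / (2 * π) = n := by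
    intro u hu
    have hexp : Complex.exp ((θ u : ℂ) * Complex.I) = Complex.exp ((θ' u : ℂ) * Complex.I) := by
      rw [← h1 u hu, h2 u hu]
    rw [Complex.exp_eq_exp_iff_exists_int] at hexp
    obtain ⟨n, hn⟩ := hexp
    refine ⟨n, ?_⟩
    have him := congrArg Complex.im hn
    simp [Complex.add_im, Complex.mul_im, Complex.mul_re] at him
    have hpi : (2 * π) ≠ 0 := by positivity
    field_simp
    linarith
  have hfc : ContinuousOn (fun u => (θ u - θ' u) / (2 * π)) (Icc a b) :=
    (hθ.sub hθ').div_const _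
  have := aux_int_const isPreconnected_Icc hfc key
    (⟨le_refl a, hab⟩ : a ∈ Icc a b) (⟨hab, le_refl b⟩ : b ∈ Icc a b)
  have hpi : (2 * π) ≠ 0 := by positivity
  field_simp at this
  linarith

set_option maxHeartbeats 1000000 in
/-- if `{σ_t}` is a regular homotopy between regular curves `σ_0`
and `σ_1` in ℝ² which fixes the endpoints and the end directions (i.e.
`σ_t(a)`, `σ_t(b)`, `e_{σ_t}(a)`, `e_{σ_t}(b)` do not depend on `t`), then
`i_{σ_0} = i_{σ_1}` (computed from any angle functions `θ₀`, `θ₁` for `σ_0`, `σ_1`). -/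
theorem i_index_eq_of_regular_homotopy_rel_ends
    (a b : ℝ) (hab : a ≤ b) (σ v : ℝ → ℝ → E2)
    (hderiv : ∀ t ∈ Icc (0:ℝ) 1, ∀ u ∈ Icc a b, HasDerivAt (σ t) (v t u) u)
    (hcont : ContinuousOn (fun p : ℝ × ℝ => v p.1 p.2) (Icc (0:ℝ) 1 ×ˢ Icc a b))
    (hne : ∀ t ∈ Icc (0:ℝ) 1, ∀ u ∈ Icc a b, v t u ≠ 0)
    (hfixa : ∀ t ∈ Icc (0:ℝ) 1, σ t a = σ 0 a)
    (hfixb : ∀ t ∈ Icc (0:ℝ) 1, σ t b = σ 0 b)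
    (hdira : ∀ t ∈ Icc (0:ℝ) 1, ‖v t a‖⁻¹ • v t a = ‖v 0 a‖⁻¹ • v 0 a)
    (hdirb : ∀ t ∈ Icc (0:ℝ) 1, ‖v t b‖⁻¹ • v t b = ‖v 0 b‖⁻¹ • v 0 b)
    (θ₀ θ₁ : ℝ → ℝ)
    (hθ₀ : IsAngleFunction a b (v 0) θ₀) (hθ₁ : IsAngleFunction a b (v 1) θ₁) :
    (θ₀ b - θ₀ a) / (2 * π) = (θ₁ b - θ₁ a) / (2 * π) := by
  classical
  have h0I : (0:ℝ) ∈ Icc (0:ℝ) 1 := ⟨le_refl 0, zero_le_one⟩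
  have h1I : (1:ℝ) ∈ Icc (0:ℝ) 1 := ⟨zero_le_one, le_refl 1⟩
  have haI : a ∈ Icc a b := ⟨le_refl a, hab⟩
  have hbI : b ∈ Icc a b := ⟨hab, le_refl b⟩
  set d : ℝ → ℝ → E2 := fun t u => ‖v t u‖⁻¹ • v t u with hd
  set c : ℝ → ℝ → ℂ := fun t u => (d t u 0 : ℂ) + (d t u 1 : ℂ) * Complex.I with hc
  set K : Set (ℝ × ℝ) := Icc (0:ℝ) 1 ×ˢ Icc a b with hK
  -- modulus one
  have habs : ∀ t ∈ Icc (0:ℝ) 1, ∀ u ∈ Icc a b, ‖c t u‖ = 1 := by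
    intro t ht u hu
    have hv := hne t ht u hu
    have hd1 : ‖d t u‖ = 1 := by
      simp only [hd]
      rw [norm_smul, norm_inv, norm_norm, inv_mul_cancel₀ (norm_ne_zero_iff.2 hv)]
    have hre : (c t u).re = d t u 0 := by simp [hc]
    have him : (c t u).im = d t u 1 := by simp [hc]
    have h1 : ‖c t u‖ = Real.sqrt (d t u 0 * d t u 0 + d t u 1 * d t u 1) := by
      rw [Complex.norm_def, Complex.normSq_apply, hre, him]
    have h2 : ‖d t u‖ = Real.sqrt (d t u 0 * d t u 0 + d t u 1 * d t u 1) := by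
      rw [EuclideanSpace.norm_eq]
      congr 1
      simp [Fin.sum_univ_two, Real.norm_eq_abs, sq_abs]
      ring
    rw [h1, ← h2, hd1]
  have hcne : ∀ t ∈ Icc (0:ℝ) 1, ∀ u ∈ Icc a b, c t u ≠ 0 := by
    intro t ht u hu h
    have := habs t ht u hu
    rw [h] at this; simp at this
  -- fixed end directions
  have hca : ∀ t ∈ Icc (0:ℝ) 1, c t a = c 0 a := by
    intro t ht
    have : d t a = d 0 a := hdira t ht
    simp [hc, this]
  have hcb : ∀ t ∈ Icc (0:ℝ) 1, c t b = c 0 b := by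
    intro t ht
    have : d t b = d 0 b := hdirb t ht
    simp [hc, this]
  -- continuity
  have hdcont : ContinuousOn (fun p : ℝ × ℝ => d p.1 p.2) K := by
    show ContinuousOn (fun p : ℝ × ℝ => ‖v p.1 p.2‖⁻¹ • v p.1 p.2) K
    refine ContinuousOn.smul (f := fun p : ℝ × ℝ => ‖v p.1 p.2‖⁻¹) ?_ hcont
    exact (hcont.norm).inv₀ (fun p hp => norm_ne_zero_iff.2 (hne p.1 hp.1 p.2 hp.2))
  have hproj : ∀ i : Fin 2, ContinuousOn (fun p : ℝ × ℝ => d p.1 p.2 i) K := fun i =>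
    (EuclideanSpace.proj i).continuous.comp_continuousOn hdcont
  have hccont : ContinuousOn (fun p : ℝ × ℝ => c p.1 p.2) K := by
    simp only [hc]
    exact (Complex.continuous_ofReal.comp_continuousOn (hproj 0)).add
      ((Complex.continuous_ofReal.comp_continuousOn (hproj 1)).mul continuousOn_const)
  -- uniform continuity constant
  have hKc : IsCompact K := isCompact_Icc.prod isCompact_Icc
  have huc := hKc.uniformContinuousOn_of_continuous hccont
  rw [Metric.uniformContinuousOn_iff] at huc
  obtain ⟨δ, hδpos, Hδ⟩ := huc 1 one_pos
  have hδ1 : ∀ t ∈ Icc (0:ℝ) 1, ∀ t' ∈ Icc (0:ℝ) 1, |t' - t| < δ →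
      ∀ u ∈ Icc a b, ‖c t' u - c t u‖ < 1 := by
    intro t ht t' ht' hlt u hu
    have hdist : dist ((t', u) : ℝ × ℝ) ((t, u) : ℝ × ℝ) < δ := by
      rw [Prod.dist_eq]
      apply max_lt
      · rwa [Real.dist_eq]
      · simpa using hδpos
    have := Hδ (t', u) ⟨ht', hu⟩ (t, u) ⟨ht, hu⟩ hdist
    rwa [Complex.dist_eq] at this
  -- the property being propagated
  set P : ℝ → Prop := fun t => ∃ θ : ℝ → ℝ, ContinuousOn θ (Icc a b) ∧
      (∀ u ∈ Icc a b, c t u = Complex.exp ((θ u : ℂ) * Complex.I)) ∧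
      θ b - θ a = θ₀ b - θ₀ a with hP
  -- conversion from IsAngleFunction to exp form
  have toExp : ∀ t (θ : ℝ → ℝ), (∀ u ∈ Icc a b, d t u = vec2 (Real.cos (θ u)) (Real.sin (θ u))) →
      ∀ u ∈ Icc a b, c t u = Complex.exp ((θ u : ℂ) * Complex.I) := by
    intro t θ h u hu
    have h0 : d t u 0 = Real.cos (θ u) := by rw [h u hu]; simp [vec2]
    have h1 : d t u 1 = Real.sin (θ u) := by rw [h u hu]; simp [vec2]
    simp only [hc, h0, h1]
    rw [Complex.exp_mul_I, ← Complex.ofReal_cos, ← Complex.ofReal_sin]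
  have hP0 : P 0 := ⟨θ₀, hθ₀.1, toExp 0 θ₀ hθ₀.2, rfl⟩
  -- propagation step
  have step : ∀ t ∈ Icc (0:ℝ) 1, ∀ t' ∈ Icc (0:ℝ) 1, |t' - t| < δ → P t → P t' := by
    intro t ht t' ht' hlt ⟨θ, hθc, hθe, hθd⟩
    set w : ℝ → ℂ := fun u => c t' u / c t u with hw
    have hwabs : ∀ u ∈ Icc a b, ‖w u‖ = 1 := by
      intro u hu
      rw [hw]; simp only [norm_div, habs t ht u hu, habs t' ht' u hu]; norm_num
    have hwre : ∀ u ∈ Icc a b, 0 < (w u).re := by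
      intro u hu
      have h1 : ‖w u - 1‖ < 1 := by
        have : w u - 1 = (c t' u - c t u) / c t u := by
          rw [hw]; field_simp [hcne t ht u hu]
        rw [this, norm_div, habs t ht u hu, div_one]
        exact hδ1 t ht t' ht' hlt u hu
      have h2 : (1 : ℝ) - (w u).re ≤ ‖w u - 1‖ := by
        calc (1:ℝ) - (w u).re = (1 - w u).re := by simp
        _ ≤ ‖1 - w u‖ := Complex.re_le_norm _
        _ = ‖w u - 1‖ := norm_sub_rev 1 (w u)
      linarith
    have hwcont : ContinuousOn w (Icc a b) := by
      have hc1 : ContinuousOn (fun u => c t' u) (Icc a b) := by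
        have h : ContinuousOn (fun u : ℝ => ((t', u) : ℝ × ℝ)) (Icc a b) :=
          (Continuous.prodMk_right t').continuousOn
        have h2 := ContinuousOn.comp (t := K) hccont h (fun u hu => ⟨ht', hu⟩)
        exact h2
      have hc2 : ContinuousOn (fun u => c t u) (Icc a b) := by
        have h : ContinuousOn (fun u : ℝ => ((t, u) : ℝ × ℝ)) (Icc a b) :=
          (Continuous.prodMk_right t).continuousOn
        have h2 := ContinuousOn.comp (t := K) hccont h (fun u hu => ⟨ht, hu⟩)
        exact h2
      exact hc1.div hc2 (fun u hu => hcne t ht u hu)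
    have hargcont : ContinuousOn (fun u => (w u).arg) (Icc a b) := by
      intro u hu
      exact (Complex.continuousAt_arg (Or.inl (hwre u hu))).comp_continuousWithinAt
        (hwcont u hu)
    refine ⟨fun u => θ u + (w u).arg, hθc.add hargcont, ?_, ?_⟩
    · intro u hu
      have hexpw : Complex.exp ((((w u).arg : ℝ) : ℂ) * Complex.I) = w u := by
        have := Complex.norm_mul_exp_arg_mul_I (w u)
        rwa [hwabs u hu, Complex.ofReal_one, one_mul] at this
      have : c t' u = c t u * w u := by
        rw [hw]
        field_simp [hcne t ht u hu]
      rw [this, hθe u hu, Complex.ofReal_add, add_mul, Complex.exp_add, hexpw]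
    · have hwa : w a = 1 := by
        show c t' a / c t a = 1
        rw [hca t ht, hca t' ht']
        exact div_self (hcne 0 h0I a haI)
      have hwb : w b = 1 := by
        show c t' b / c t b = 1
        rw [hcb t ht, hcb t' ht']
        exact div_self (hcne 0 h0I b hbI)
      show θ b + (w b).arg - (θ a + (w a).arg) = θ₀ b - θ₀ a
      rw [hwa, hwb, Complex.arg_one]
      simpa using hθd
  -- connectedness argument
  set U : Set ℝ := ⋃ t ∈ {t ∈ Icc (0:ℝ) 1 | P t}, Metric.ball t δ with hU
  set V : Set ℝ := ⋃ t ∈ {t ∈ Icc (0:ℝ) 1 | ¬ P t}, Metric.ball t δ with hV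
  have hUopen : IsOpen U := isOpen_biUnion fun _ _ => Metric.isOpen_ball
  have hVopen : IsOpen V := isOpen_biUnion fun _ _ => Metric.isOpen_ball
  have hcover : Icc (0:ℝ) 1 ⊆ U ∪ V := by
    intro t ht
    by_cases h : P t
    · exact Or.inl (mem_biUnion ⟨ht, h⟩ (Metric.mem_ball_self hδpos))
    · exact Or.inr (mem_biUnion ⟨ht, h⟩ (Metric.mem_ball_self hδpos))
  have hdisj : ¬ (Icc (0:ℝ) 1 ∩ (U ∩ V)).Nonempty := by
    rintro ⟨s, hs, hsU, hsV⟩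
    obtain ⟨t, ⟨htI, htP⟩, hst⟩ := mem_iUnion₂.1 hsU
    obtain ⟨t', ⟨ht'I, ht'P⟩, hst'⟩ := mem_iUnion₂.1 hsV
    have hPs : P s := step t htI s hs (by rw [← Real.dist_eq]; exact hst) htP
    exact ht'P (step s hs t' ht'I (by rw [abs_sub_comm, ← Real.dist_eq]; exact hst') hPs)
  have hU0 : (Icc (0:ℝ) 1 ∩ U).Nonempty :=
    ⟨0, h0I, mem_biUnion ⟨h0I, hP0⟩ (Metric.mem_ball_self hδpos)⟩
  have hVempty : ¬ (Icc (0:ℝ) 1 ∩ V).Nonempty := fun h =>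
    hdisj (isPreconnected_Icc U V hUopen hVopen hcover hU0 h)
  have h1U : (1:ℝ) ∈ U := by
    rcases hcover h1I with h | h
    · exact h
    · exact absurd ⟨1, h1I, h⟩ hVempty
  obtain ⟨t, ⟨htI, htP⟩, h1t⟩ := mem_iUnion₂.1 h1U
  have hP1 : P 1 := step t htI 1 h1I (by rw [← Real.dist_eq]; exact h1t) htP
  obtain ⟨θ, hθc, hθe, hθd⟩ := hP1
  have := aux_diff_eq a b hab (c 1) θ₁ θ hθ₁.1 hθc (toExp 1 θ₁ hθ₁.2) hθe
  rw [this, hθd]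
end
end

section
/- Let G = ⟨a, b | a b a b⁻¹ = 1⟩ be the fundamental group of the Klein bottle, with orientation homomorphism w : G → {±1} given by w(a) = 1, w(b) = −1. Every element of G can be written uniquely as aᵐbⁿ with m, n ∈ ℤ; such an element satisfies w(aᵐbⁿ) = (−1)ⁿ; and for n even, aᵐbⁿ is reversible if and only if m = 0. -/
namespace KleinAux
def ε (n : ℤ) : ℤ := ((-1 : ℤˣ) ^ n : ℤˣ)
lemma ε_add (m n : ℤ) : ε (m + n) = ε m * ε n := by
  simp [ε, zpow_add, Units.val_mul]
lemma ε_zero : ε 0 = 1 := rfl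
lemma ε_one : ε 1 = -1 := rfl
lemma ε_mul_self (n : ℤ) : ε n * ε n = 1 := by
  rw [ε, ← Units.val_mul, ← zpow_add, ← two_mul, zpow_mul, zpow_two]
  simp
lemma ε_neg (n : ℤ) : ε (-n) = ε n := by
  calc ε (-n) = ε (-n) * (ε n * ε n) := by rw [ε_mul_self, mul_one]
    _ = (ε (-n) * ε n) * ε n := by ring
    _ = ε n := by rw [← ε_add, neg_add_cancel, ε_zero, one_mul]
lemma ε_even {n : ℤ} (h : Even n) : ε n = 1 := by
  obtain ⟨k, rfl⟩ := h
  rw [ε_add, ε_mul_self]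

/-- Model of the Klein bottle group: `ℤ ⋊ ℤ`. -/
@[ext] structure K where
  m : ℤ
  n : ℤ

instance : Mul K := ⟨fun x y => ⟨x.m + ε x.n * y.m, x.n + y.n⟩⟩
instance : One K := ⟨⟨0, 0⟩⟩
instance : Inv K := ⟨fun x => ⟨-(ε x.n * x.m), -x.n⟩⟩

lemma K_mul (x y : K) : x * y = ⟨x.m + ε x.n * y.m, x.n + y.n⟩ := rfl
lemma K_inv (x : K) : x⁻¹ = ⟨-(ε x.n * x.m), -x.n⟩ := rfl
lemma K_one : (1 : K) = ⟨0, 0⟩ := rfl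

instance : Group K where
  mul_assoc x y z := by
    simp only [K_mul, ε_add]
    ext <;> dsimp <;> ring
  one_mul x := by simp only [K_mul, K_one]; ext <;> simp [ε_zero]
  mul_one x := by simp only [K_mul, K_one]; ext <;> simp
  inv_mul_cancel x := by
    simp only [K_mul, K_inv, K_one]
    ext <;> simp [ε_neg, ← mul_assoc, ε_mul_self]

lemma Ka_pow (p : ℤ) : (⟨1, 0⟩ : K) ^ p = ⟨p, 0⟩ := by
  induction p using Int.induction_on with
  | zero => rfl
  | succ k ih => rw [zpow_add_one, ih, K_mul]; ext <;> simp [ε_zero]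
  | pred k ih => rw [zpow_sub_one, ih, K_inv, K_mul]; ext <;> simp [ε_zero, sub_eq_add_neg]

lemma Kb_pow (q : ℤ) : (⟨0, 1⟩ : K) ^ q = ⟨0, q⟩ := by
  induction q using Int.induction_on with
  | zero => rfl
  | succ k ih => rw [zpow_add_one, ih, K_mul]; ext <;> simp
  | pred k ih => rw [zpow_sub_one, ih, K_inv, K_mul]; ext <;> simp [sub_eq_add_neg]

end KleinAux


/-- An element `g` of a group `G` equipped with a homomorphism `w : G → {±1}` is
*reversible* if some element of the centralizer of `g` is sent to `−1` by `w`. -/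
def Reversible {G : Type*} [Group G] (w : G →* ℤˣ) (g : G) : Prop :=
  ∃ h : G, Commute h g ∧ w h = -1

/-- The single relation `a * b * a * b⁻¹` of the Klein bottle group. -/
def kleinRels : Set (FreeGroup (Fin 2)) :=
  {FreeGroup.of 0 * FreeGroup.of 1 * FreeGroup.of 0 * (FreeGroup.of 1)⁻¹}

/-- The Klein bottle group `⟨a, b | a b a b⁻¹⟩`. -/
abbrev KleinGroup : Type := PresentedGroup kleinRels

def Ka : KleinGroup := PresentedGroup.of 0

def Kb : KleinGroup := PresentedGroup.of 1

/-- The orientation homomorphism `w : KleinGroup → {±1}`, `w(a) = 1`, `w(b) = −1`. -/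
def kleinW : KleinGroup →* ℤˣ :=
  PresentedGroup.toGroup (f := fun i : Fin 2 => if i = 0 then 1 else -1)
    (by
      intro r hr
      rw [kleinRels, Set.mem_singleton_iff] at hr
      subst hr
      simp)

namespace KleinAux

lemma klein_rel : Ka * Kb * Ka * Kb⁻¹ = 1 := by
  have h : (PresentedGroup.mk kleinRels)
      (FreeGroup.of 0 * FreeGroup.of 1 * FreeGroup.of 0 * (FreeGroup.of 1)⁻¹) = 1 := by
    apply (QuotientGroup.eq_one_iff _).mpr
    exact Subgroup.subset_normalClosure (by simp [kleinRels])
  simpa [Ka, Kb, PresentedGroup.of] using h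

lemma conj_b_a : Kb * Ka * Kb⁻¹ = Ka⁻¹ := by
  have h : Ka * (Kb * Ka * Kb⁻¹) = 1 := by
    rw [← klein_rel]; group
  exact (inv_eq_of_mul_eq_one_right h).symm

lemma conj_pow (m : ℤ) : Kb * Ka ^ m * Kb⁻¹ = Ka ^ (-m) := by
  rw [← conj_zpow, conj_b_a, inv_zpow, zpow_neg]

lemma comm_pow (n m : ℤ) : Kb ^ n * Ka ^ m = Ka ^ (ε n * m) * Kb ^ n := by
  induction n using Int.induction_on generalizing m with
  | zero => simp [ε_zero]
  | succ k ih =>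
      have step : Kb * Ka ^ (ε k * m) = Ka ^ (-(ε k * m)) * Kb := by
        rw [← conj_pow]; group
      calc Kb ^ (k + 1 : ℤ) * Ka ^ m = Kb ^ (k : ℤ) * (Kb * Ka ^ m * Kb⁻¹) * Kb := by group
        _ = Kb ^ (k : ℤ) * Ka ^ (-m) * Kb := by rw [conj_pow]
        _ = Ka ^ (ε k * (-m)) * Kb ^ (k + 1 : ℤ) := by rw [ih (-m)]; group
        _ = Ka ^ (ε (k + 1) * m) * Kb ^ (k + 1 : ℤ) := by
            rw [show ε (k + 1) * m = ε k * (-m) by rw [ε_add, ε_one]; ring]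
  | pred k ih =>
      have hc : Kb⁻¹ * Ka ^ m * Kb = Ka ^ (-m) := by
        have h2 := conj_pow (-m)
        rw [neg_neg] at h2
        rw [← h2]; group
      calc Kb ^ (-k - 1 : ℤ) * Ka ^ m = Kb ^ (-k : ℤ) * (Kb⁻¹ * Ka ^ m * Kb) * Kb⁻¹ := by group
        _ = Kb ^ (-k : ℤ) * Ka ^ (-m) * Kb⁻¹ := by rw [hc]
        _ = Ka ^ (ε (-k) * (-m)) * Kb ^ (-k - 1 : ℤ) := by rw [ih (-m)]; group
        _ = Ka ^ (ε (-k - 1) * m) * Kb ^ (-k - 1 : ℤ) := by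
            rw [show ε (-k - 1) * m = ε (-k) * (-m) by
              rw [show (-k - 1 : ℤ) = -k + -1 by ring, ε_add, ε_neg 1, ε_one]; ring]

/-- The homomorphism to the model group. -/
def φ : KleinGroup →* K :=
  PresentedGroup.toGroup (f := fun i : Fin 2 => if i = 0 then ⟨1, 0⟩ else ⟨0, 1⟩)
    (by
      intro r hr
      rw [kleinRels, Set.mem_singleton_iff] at hr
      subst hr
      simp only [map_mul, map_inv, FreeGroup.lift_apply_of]
      norm_num
      ext <;> simp [K_mul, K_inv, K_one, ε_zero, ε_one])

lemma φ_Ka : φ Ka = ⟨1, 0⟩ := PresentedGroup.toGroup.of _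
lemma φ_Kb : φ Kb = ⟨0, 1⟩ := PresentedGroup.toGroup.of _

/-- The inverse homomorphism. -/
def ψ : K →* KleinGroup where
  toFun x := Ka ^ x.m * Kb ^ x.n
  map_one' := by simp [K_one]
  map_mul' x y := by
    obtain ⟨a, b⟩ := x; obtain ⟨c, d⟩ := y
    simp only [K_mul]
    rw [zpow_add, zpow_add]
    calc Ka ^ a * Ka ^ (ε b * c) * (Kb ^ b * Kb ^ d)
        = Ka ^ a * (Ka ^ (ε b * c) * Kb ^ b) * Kb ^ d := by group
      _ = Ka ^ a * (Kb ^ b * Ka ^ c) * Kb ^ d := by rw [← comm_pow]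
      _ = Ka ^ a * Kb ^ b * (Ka ^ c * Kb ^ d) := by group

lemma ψφ (g : KleinGroup) : ψ (φ g) = g := by
  have h : ψ.comp φ = MonoidHom.id KleinGroup := by
    apply PresentedGroup.ext
    intro x
    fin_cases x <;>
      simp [φ, ψ, Ka, Kb, PresentedGroup.toGroup.of, MonoidHom.comp_apply]
  calc ψ (φ g) = (ψ.comp φ) g := rfl
    _ = g := by rw [h]; rfl

lemma φ_form (m n : ℤ) : φ (Ka ^ m * Kb ^ n) = ⟨m, n⟩ := by
  rw [map_mul, map_zpow, map_zpow, φ_Ka, φ_Kb, Ka_pow, Kb_pow, K_mul]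
  ext <;> simp

end KleinAux

open KleinAux in
/-- in the Klein bottle group `G = ⟨a, b | abab⁻¹⟩` with orientation
homomorphism `w(a) = 1`, `w(b) = −1`: every element is uniquely of the form
`a^m * b^n`; such an element satisfies `w(a^m b^n) = (−1)^n`; and for even `n`,
`a^m b^n` is reversible iff `m = 0`. -/
theorem klein_bottle_normal_form_orientation_reversibility :
    (∀ g : KleinGroup, ∃! mn : ℤ × ℤ, g = Ka ^ mn.1 * Kb ^ mn.2) ∧
    (∀ m n : ℤ, kleinW (Ka ^ m * Kb ^ n) = (-1) ^ n) ∧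
    (∀ m n : ℤ, Even n → (Reversible kleinW (Ka ^ m * Kb ^ n) ↔ m = 0)) := by
  have hW : ∀ m n : ℤ, kleinW (Ka ^ m * Kb ^ n) = (-1) ^ n := by
    intro m n
    have ha : kleinW Ka = 1 := by
      simpa [kleinW, Ka] using PresentedGroup.toGroup.of (f := fun i : Fin 2 => if i = 0 then 1 else -1) _
        (x := (0 : Fin 2))
    have hb : kleinW Kb = -1 := by
      simpa [kleinW, Kb] using PresentedGroup.toGroup.of (f := fun i : Fin 2 => if i = 0 then 1 else -1) _
        (x := (1 : Fin 2))
    rw [map_mul, map_zpow, map_zpow, ha, hb, one_zpow, one_mul]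
  have hNF : ∀ g : KleinGroup, ∃! mn : ℤ × ℤ, g = Ka ^ mn.1 * Kb ^ mn.2 := by
    intro g
    refine ⟨((φ g).m, (φ g).n), ?_, ?_⟩
    · have := ψφ g
      simp only [ψ, MonoidHom.coe_mk, OneHom.coe_mk] at this
      exact this.symm
    · rintro ⟨p, q⟩ hpq
      have : φ g = ⟨p, q⟩ := by rw [hpq]; exact φ_form p q
      simp [this]
  refine ⟨hNF, hW, ?_⟩
  intro m n hn
  constructor
  · rintro ⟨h, hc, hw⟩
    obtain ⟨⟨p, q⟩, hpq, -⟩ := hNF h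
    simp only at hpq
    have hq : ε q = -1 := by
      rw [hpq, hW p q] at hw
      rw [ε, hw]; rfl
    have hφ : φ (Ka ^ p * Kb ^ q) * φ (Ka ^ m * Kb ^ n)
        = φ (Ka ^ m * Kb ^ n) * φ (Ka ^ p * Kb ^ q) := by
      rw [← map_mul, ← map_mul, ← hpq, hc]
    rw [φ_form, φ_form, K_mul, K_mul] at hφ
    have h1 : p + ε q * m = m + ε n * p := congrArg K.m hφ
    rw [hq, ε_even hn] at h1
    linarith
  · rintro rfl
    refine ⟨Kb, ?_, ?_⟩
    · simp only [zpow_zero, one_mul]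
      exact (Commute.refl Kb).zpow_right n
    · simpa [kleinW, Kb] using PresentedGroup.toGroup.of (f := fun i : Fin 2 => if i = 0 then 1 else -1) _
        (x := (1 : Fin 2))
end

section
/- Let F be a free group and w : F → {±1} a nontrivial homomorphism. For a nontrivial element g ∈ F with w(g) = 1, g is reversible with respect to w if and only if g is a power of some element h ∈ F with w(h) = −1. -/
/-- Distinct generators of a free group do not commute. -/
lemma FreeGroup.not_commute_of_ne {X : Type*} {a b : X} (hab : a ≠ b) :
    ¬ Commute (FreeGroup.of a) (FreeGroup.of b) := by
  intro hc
  classical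
  let f : FreeGroup X →* Equiv.Perm (Fin 3) :=
    FreeGroup.lift (fun x => if x = a then Equiv.swap 0 1 else Equiv.swap 1 2)
  have hfa : f (FreeGroup.of a) = Equiv.swap 0 1 := by simp [f]
  have hfb : f (FreeGroup.of b) = Equiv.swap 1 2 := by
    simp [f, (Ne.symm hab)]
  have := hc.map f
  rw [Commute, SemiconjBy, hfa, hfb] at this
  revert this
  decide

/-- Two commuting elements of a free group are powers of a common element. -/
lemma FreeGroup.commute_exists_common {ι : Type*} {x y : FreeGroup ι}
    (hc : Commute x y) : ∃ (z : FreeGroup ι) (m n : ℤ), x = z ^ m ∧ y = z ^ n := by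
  classical
  set H : Subgroup (FreeGroup ι) := Subgroup.closure {x, y} with hH
  have hxH : x ∈ H := Subgroup.subset_closure (by simp)
  have hyH : y ∈ H := Subgroup.subset_closure (by simp)
  -- all elements of H commute
  have hcomm : ∀ p q : FreeGroup ι, p ∈ H → q ∈ H → Commute p q := by
    intro p q hp hq
    refine Subgroup.closure_induction₂ (p := fun u v _ _ => Commute u v)
      (fun u v hu hv => ?_)
      (fun u _ => Commute.one_left u) (fun u _ => Commute.one_right u)
      (fun u v z _ _ _ h1 h2 => h1.mul_left h2)
      (fun u v z _ _ _ h1 h2 => h1.mul_right h2)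
      (fun u v _ _ h => h.inv_left)
      (fun u v _ _ h => h.inv_right) hp hq
    rcases hu with rfl | rfl <;> rcases hv with rfl | rfl
    · exact Commute.refl _
    · exact hc
    · exact hc.symm
    · exact Commute.refl _
  -- H is a free group (Nielsen–Schreier)
  have hsub : Subsingleton (IsFreeGroup.Generators H) := by
    constructor
    intro a b
    by_contra hab
    apply FreeGroup.not_commute_of_ne hab
    have : Commute (IsFreeGroup.of a : H) (IsFreeGroup.of b) := by
      have h2 := hcomm ((IsFreeGroup.of a : H) : FreeGroup ι)
        ((IsFreeGroup.of b : H) : FreeGroup ι)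
        (IsFreeGroup.of a : H).2 (IsFreeGroup.of b : H).2
      exact Subtype.ext (h2 : _)
    have := this.map (IsFreeGroup.toFreeGroup H).toMonoidHom
    simpa [IsFreeGroup.toFreeGroup, IsFreeGroup.of] using this
  rcases isEmpty_or_nonempty (IsFreeGroup.Generators H) with he | hne
  · -- H is trivial
    haveI : Subsingleton (FreeGroup (IsFreeGroup.Generators H)) :=
      (FreeGroup.freeGroupCongr (Equiv.equivEmpty
        (IsFreeGroup.Generators H))).toEquiv.subsingleton
    haveI hsubH : Subsingleton H := (IsFreeGroup.toFreeGroup H).toEquiv.subsingleton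
    have hx1 : x = 1 := by
      have := congrArg (Subtype.val) (Subsingleton.elim (⟨x, hxH⟩ : H) 1)
      simpa using this
    have hy1 : y = 1 := by
      have := congrArg (Subtype.val) (Subsingleton.elim (⟨y, hyH⟩ : H) 1)
      simpa using this
    exact ⟨1, 0, 0, by simp [hx1], by simp [hy1]⟩
  · haveI : Unique (IsFreeGroup.Generators H) := uniqueOfSubsingleton hne.some
    let e : IsFreeGroup.Generators H ≃ Unit := Equiv.ofUnique _ _
    let Φ : H ≃* FreeGroup Unit := (IsFreeGroup.toFreeGroup H).trans (FreeGroup.freeGroupCongr e)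
    have hpow : ∀ u : FreeGroup Unit, ∃ n : ℤ, u = FreeGroup.of () ^ n := by
      intro u
      exact ⟨FreeGroup.freeGroupUnitEquivInt u, (FreeGroup.freeGroupUnitEquivInt.left_inv u).symm⟩
    set z0 : H := Φ.symm (FreeGroup.of ()) with hz0
    have key : ∀ p : H, ∃ n : ℤ, p = z0 ^ n := by
      intro p
      obtain ⟨n, hn⟩ := hpow (Φ p)
      exact ⟨n, by
        have := congrArg Φ.symm hn
        simpa [map_zpow] using this⟩
    obtain ⟨m, hm⟩ := key ⟨x, hxH⟩
    obtain ⟨n, hn⟩ := key ⟨y, hyH⟩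
    refine ⟨(z0 : FreeGroup ι), m, n, ?_, ?_⟩
    · have := congrArg (Subtype.val) hm
      simpa using this
    · have := congrArg (Subtype.val) hn
      simpa using this

/-- in a free group `F` with a nontrivial homomorphism
`w : F → {±1}`, a nontrivial orientation-preserving element `g` (that is, `g ≠ 1`
and `w(g) = 1`) is reversible iff it is a power of some element `h` with
`w(h) = −1`. -/
theorem reversible_iff_zpow_of_orientation_reversing {ι : Type*}
    (w : FreeGroup ι →* ℤˣ) (hw : ∃ x : FreeGroup ι, w x ≠ 1)
    (g : FreeGroup ι) (hg : g ≠ 1) (hgw : w g = 1) :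
    Reversible w g ↔ ∃ (h : FreeGroup ι) (n : ℤ), w h = -1 ∧ g = h ^ n := by
  constructor
  · rintro ⟨h, hc, hwh⟩
    obtain ⟨z, m, n, hhz, hgz⟩ := FreeGroup.commute_exists_common hc
    have hwz : w z = -1 := by
      rcases Int.units_eq_one_or (w z) with h1 | h1
      · exfalso
        rw [hhz, map_zpow, h1, one_zpow] at hwh
        exact absurd hwh (by decide)
      · exact h1
    exact ⟨z, n, hwz, hgz⟩
  · rintro ⟨h, n, hwh, rfl⟩
    exact ⟨h, (Commute.refl h).zpow_right n, hwh⟩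
end

section
/- Let γ : [a,b] → ℝ² be a regular curve of length ℓ from p = (0,0) to q = (d,0) with e_γ(a) = e_γ(b) = (1,0), parametrized by arc length. For 0 < t ≤ 1 define τ_t to be the concatenation of the scaled curve t·γ (from 0 to t(d,0)) with the horizontal segment from t(d,0) to (d,0). Then each τ_t (after constant-speed reparametrization) is a regular curve with the same endpoints and end directions as γ, the family {τ_t}, t ∈ [ε, 1], is a regular homotopy from τ_ε to γ = τ_1, and i_{τ_t} = i_γ for all t. -/
open Real Set

noncomputable section

/-- The squeezed curve `τ_t`, parametrized with constant speed
`c = (tℓ + (1−t)d)/ℓ` on `[0, ℓ]`: first the scaled curve `t·γ` (of length `tℓ`),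
then the horizontal segment from `t(d,0)` to `(d,0)`. -/
def squeeze (γ : ℝ → E2) (ℓ d t s : ℝ) : E2 :=
  if (t * ℓ + (1 - t) * d) / ℓ * s ≤ t * ℓ then
    t • γ ((t * ℓ + (1 - t) * d) / ℓ * s / t)
  else
    t • γ ℓ + ((t * ℓ + (1 - t) * d) / ℓ * s - t * ℓ) • vec2 1 0

/-- Extension of `γ` beyond `ℓ` by a straight horizontal line. -/
def GammaExt (γ : ℝ → E2) (ℓ : ℝ) (u : ℝ) : E2 :=
  if u ≤ ℓ then γ u else γ ℓ + (u - ℓ) • vec2 1 0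

lemma gammaExt_eq_of_le {γ : ℝ → E2} {ℓ u : ℝ} (h : ℓ ≤ u) :
    GammaExt γ ℓ u = γ ℓ + (u - ℓ) • vec2 1 0 := by
  unfold GammaExt
  by_cases h' : u ≤ ℓ
  · have : u = ℓ := le_antisymm h' h
    simp [this]
  · simp [h']

lemma gammaExt_deriv (γ v : ℝ → E2) (ℓ L : ℝ) (hl : 0 ≤ ℓ) (hL : ℓ ≤ L)
    (hderiv : ∀ u ∈ Icc (0:ℝ) ℓ, HasDerivWithinAt γ (v u) (Icc (0:ℝ) ℓ) u)
    (hvl : v ℓ = vec2 1 0) :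
    ∀ u ∈ Icc (0:ℝ) L, HasDerivWithinAt (GammaExt γ ℓ) (v (min u ℓ)) (Icc (0:ℝ) L) u := by
  intro u hu
  have hA : HasDerivWithinAt (GammaExt γ ℓ) (v (min u ℓ)) (Icc 0 ℓ) u := by
    by_cases h : u ≤ ℓ
    · rw [min_eq_left h]
      refine (hderiv u ⟨hu.1, h⟩).congr (fun x hx => ?_) ?_
      · simp [GammaExt, hx.2]
      · simp [GammaExt, h]
    · exact HasFDerivWithinAt.of_notMem_closure (by
        rw [closure_Icc]; exact fun hc => h hc.2)
  have hB : HasDerivWithinAt (GammaExt γ ℓ) (v (min u ℓ)) (Icc ℓ L) u := by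
    by_cases h : ℓ ≤ u
    · rw [min_eq_right h, hvl]
      have haff : HasDerivAt (fun x : ℝ => γ ℓ + (x - ℓ) • vec2 1 0) (vec2 1 0) u := by
        simpa using (((hasDerivAt_id u).sub_const ℓ).smul_const (vec2 1 0)).const_add (γ ℓ)
      exact haff.hasDerivWithinAt.congr (fun x hx => gammaExt_eq_of_le hx.1)
        (gammaExt_eq_of_le h)
    · exact HasFDerivWithinAt.of_notMem_closure (by
        rw [closure_Icc]; exact fun hc => h hc.1)
  have := hA.union hB
  rwa [Set.Icc_union_Icc_eq_Icc hl hL] at this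

lemma squeeze_eq (γ : ℝ → E2) (ℓ d t : ℝ) (ht : 0 < t) (s : ℝ) :
    squeeze γ ℓ d t s = t • GammaExt γ ℓ ((t * ℓ + (1 - t) * d) / ℓ * s / t) := by
  have hiff : (t * ℓ + (1 - t) * d) / ℓ * s / t ≤ ℓ ↔
      (t * ℓ + (1 - t) * d) / ℓ * s ≤ t * ℓ := by
    rw [div_le_iff₀ ht]
    constructor <;> intro h <;> linarith
  unfold squeeze GammaExt
  by_cases h : (t * ℓ + (1 - t) * d) / ℓ * s ≤ t * ℓ
  · rw [if_pos h, if_pos (hiff.mpr h)]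
  · rw [if_neg h, if_neg (fun h' => h (hiff.mp h'))]
    rw [smul_add, smul_smul]
    congr 2
    generalize (t * ℓ + (1 - t) * d) / ℓ = C
    field_simp

lemma vec2_norm_one : ‖vec2 1 0‖ = 1 := by
  rw [show vec2 1 0 = EuclideanSpace.single (0 : Fin 2) (1:ℝ) by
    unfold vec2
    ext i
    fin_cases i <;> simp [EuclideanSpace.single]]
  simp

set_option maxHeartbeats 1000000 in
/-- 'squeezing': let `γ : [0,ℓ] → ℝ²` be a regular curve of length
`ℓ`, parametrized by arc length, from `(0,0)` to `(d,0)` with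
`e_γ(0) = e_γ(ℓ) = (1,0)`.  For `0 < t ≤ 1` let `τ_t` be the concatenation of
`t·γ` with the horizontal segment from `t(d,0)` to `(d,0)`, reparametrized with
constant speed on `[0,ℓ]`.  Then `τ_1 = γ`; each `τ_t` (`ε ≤ t ≤ 1`) is a regular
curve with the same endpoints and end directions as `γ`; the family
`{τ_t}_{t ∈ [ε,1]}` is a regular homotopy; and `i_{τ_t} = i_γ` for all `t`. -/
theorem squeeze_regular_homotopy (ℓ d ε : ℝ)
    (hd : 0 < d) (hdl : d ≤ ℓ) (hε : 0 < ε) (hε1 : ε ≤ 1)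
    (γ v : ℝ → E2)
    (hderiv : ∀ u ∈ Icc (0:ℝ) ℓ, HasDerivWithinAt γ (v u) (Icc (0:ℝ) ℓ) u)
    (hcont : ContinuousOn v (Icc (0:ℝ) ℓ))
    (hunit : ∀ u ∈ Icc (0:ℝ) ℓ, ‖v u‖ = 1)
    (h0 : γ 0 = 0) (hl : γ ℓ = d • vec2 1 0)
    (hv0 : v 0 = vec2 1 0) (hvl : v ℓ = vec2 1 0) :
    ∃ V : ℝ → ℝ → E2,
      (∀ s ∈ Icc (0:ℝ) ℓ, squeeze γ ℓ d 1 s = γ s) ∧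
      (∀ t ∈ Icc ε 1, squeeze γ ℓ d t 0 = γ 0 ∧ squeeze γ ℓ d t ℓ = γ ℓ) ∧
      (∀ t ∈ Icc ε 1, ∀ s ∈ Icc (0:ℝ) ℓ,
        HasDerivWithinAt (squeeze γ ℓ d t) (V t s) (Icc (0:ℝ) ℓ) s ∧ V t s ≠ 0) ∧
      ContinuousOn (fun p : ℝ × ℝ => V p.1 p.2) (Icc ε 1 ×ˢ Icc (0:ℝ) ℓ) ∧
      (∀ t ∈ Icc ε 1,
        ‖V t 0‖⁻¹ • V t 0 = vec2 1 0 ∧ ‖V t ℓ‖⁻¹ • V t ℓ = vec2 1 0) ∧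
      (∀ t ∈ Icc ε 1, ∀ θt θγ : ℝ → ℝ,
        IsAngleFunction 0 ℓ (V t) θt → IsAngleFunction 0 ℓ v θγ →
          (θt ℓ - θt 0) / (2 * π) = (θγ ℓ - θγ 0) / (2 * π)) := by
  have hl0 : 0 < ℓ := lt_of_lt_of_le hd hdl
  -- the speed factor
  set c : ℝ → ℝ := fun t => (t * ℓ + (1 - t) * d) / ℓ with hcdef
  -- the reparametrization map
  set g : ℝ → ℝ → ℝ := fun t s => min (c t * s / t) ℓ with hgdef
  refine ⟨fun t s => c t • v (g t s), ?_, ?_, ?_, ?_, ?_, ?_⟩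
  · -- τ₁ = γ
    intro s hs
    rw [squeeze_eq γ ℓ d 1 one_pos s]
    have h1 : (1 * ℓ + (1 - 1) * d) / ℓ * s / 1 = s := by field_simp; ring
    rw [h1, one_smul]
    simp [GammaExt, hs.2]
  · -- endpoints
    intro t ht
    have ht0 : 0 < t := lt_of_lt_of_le hε ht.1
    constructor
    · rw [squeeze_eq γ ℓ d t ht0 0]
      have : (t * ℓ + (1 - t) * d) / ℓ * 0 / t = 0 := by simp
      rw [this]
      simp [GammaExt, hl0.le, h0]
    · rw [squeeze_eq γ ℓ d t ht0 ℓ]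
      have hLl : ℓ ≤ (t * ℓ + (1 - t) * d) / ℓ * ℓ / t := by
        rw [le_div_iff₀ ht0, div_mul_cancel₀ _ hl0.ne']
        nlinarith [ht.2, hd.le]
      rw [gammaExt_eq_of_le hLl, hl, smul_add, smul_smul, smul_smul, ← add_smul]
      congr 1
      field_simp
      ring
  · -- derivatives
    intro t ht s hs
    have ht0 : 0 < t := lt_of_lt_of_le hε ht.1
    have hct : 0 < c t := by
      have : 0 < t * ℓ + (1 - t) * d := by nlinarith [ht.2]
      exact div_pos this hl0
    have hLl : ℓ ≤ c t * ℓ / t := by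
      rw [le_div_iff₀ ht0]
      have : c t * ℓ = t * ℓ + (1 - t) * d := div_mul_cancel₀ _ hl0.ne'
      rw [this]
      nlinarith [ht.2, hd.le]
    have hmaps : MapsTo (fun s => c t * s / t) (Icc 0 ℓ) (Icc 0 (c t * ℓ / t)) := by
      intro x hx
      exact ⟨div_nonneg (mul_nonneg hct.le hx.1) ht0.le,
        (div_le_div_iff_of_pos_right ht0).mpr (mul_le_mul_of_nonneg_left hx.2 hct.le)⟩
    have h1 := gammaExt_deriv γ v ℓ (c t * ℓ / t) hl0.le hLl hderiv hvl
      (c t * s / t) (hmaps hs)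
    have h2 : HasDerivWithinAt (fun s : ℝ => c t * s / t) (c t * 1 / t) (Icc 0 ℓ) s :=
      (((hasDerivAt_id s).const_mul (c t)).div_const t).hasDerivWithinAt
    have h3 := h1.scomp s h2 hmaps
    have h4 := h3.const_smul t
    have hval : t • ((c t * 1 / t) • v (min (c t * s / t) ℓ)) = c t • v (g t s) := by
      rw [smul_smul]
      congr 1
      field_simp
    rw [hval] at h4
    have hgmem : g t s ∈ Icc (0:ℝ) ℓ :=
      ⟨le_min (div_nonneg (mul_nonneg hct.le hs.1) ht0.le) hl0.le, min_le_right _ _⟩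
    refine ⟨h4.congr (fun x _ => squeeze_eq γ ℓ d t ht0 x) (squeeze_eq γ ℓ d t ht0 s), ?_⟩
    refine smul_ne_zero hct.ne' ?_
    rw [← norm_ne_zero_iff, hunit _ hgmem]
    exact one_ne_zero
  · -- continuity
    show ContinuousOn (fun p : ℝ × ℝ => c p.1 • v (g p.1 p.2)) (Icc ε 1 ×ˢ Icc (0:ℝ) ℓ)
    have hcc : Continuous c := by
      rw [hcdef]
      fun_prop
    have hinner : ContinuousOn (fun p : ℝ × ℝ => g p.1 p.2) (Icc ε 1 ×ˢ Icc (0:ℝ) ℓ) := by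
      have hdivc : ContinuousOn (fun p : ℝ × ℝ => c p.1 * p.2 / p.1)
          (Icc ε 1 ×ˢ Icc (0:ℝ) ℓ) := by
        apply ContinuousOn.div
        · exact ((hcc.comp continuous_fst).mul continuous_snd).continuousOn
        · exact continuous_fst.continuousOn
        · intro p hp
          exact (lt_of_lt_of_le hε hp.1.1).ne'
      exact continuous_min.comp_continuousOn (hdivc.prodMk continuousOn_const)
    have hmapsg : MapsTo (fun p : ℝ × ℝ => g p.1 p.2) (Icc ε 1 ×ˢ Icc (0:ℝ) ℓ)
        (Icc (0:ℝ) ℓ) := by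
      intro p hp
      have ht0 : 0 < p.1 := lt_of_lt_of_le hε hp.1.1
      have hct : 0 ≤ c p.1 := by
        have : 0 ≤ p.1 * ℓ + (1 - p.1) * d := by nlinarith [hp.1.2]
        exact div_nonneg this hl0.le
      exact ⟨le_min (div_nonneg (mul_nonneg hct hp.2.1) ht0.le) hl0.le, min_le_right _ _⟩
    exact ((hcc.comp continuous_fst).continuousOn).smul (hcont.comp hinner hmapsg)
  · -- end directions
    intro t ht
    have ht0 : 0 < t := lt_of_lt_of_le hε ht.1
    have hct : 0 < c t := by
      have : 0 < t * ℓ + (1 - t) * d := by nlinarith [ht.2]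
      exact div_pos this hl0
    have hLl : ℓ ≤ c t * ℓ / t := by
      rw [le_div_iff₀ ht0]
      have : c t * ℓ = t * ℓ + (1 - t) * d := div_mul_cancel₀ _ hl0.ne'
      rw [this]
      nlinarith [ht.2, hd.le]
    have key : ∀ w : E2, ‖w‖ = 1 → ‖c t • w‖⁻¹ • c t • w = w := by
      intro w hw
      rw [norm_smul, hw, Real.norm_eq_abs, abs_of_pos hct, mul_one, smul_smul,
        inv_mul_cancel₀ hct.ne', one_smul]
    constructor
    · have hg0 : g t 0 = 0 := by
        show min (c t * 0 / t) ℓ = 0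
        simp [hl0.le]
      show ‖c t • v (g t 0)‖⁻¹ • c t • v (g t 0) = vec2 1 0
      rw [hg0, hv0]
      exact key _ (by rw [← hv0]; exact hunit 0 ⟨le_refl _, hl0.le⟩)
    · have hgl : g t ℓ = ℓ := by
        show min (c t * ℓ / t) ℓ = ℓ
        exact min_eq_right hLl
      show ‖c t • v (g t ℓ)‖⁻¹ • c t • v (g t ℓ) = vec2 1 0
      rw [hgl, hvl]
      exact key _ (by rw [← hvl]; exact hunit ℓ ⟨hl0.le, le_refl _⟩)
  · -- index
    intro t ht θt θg hθt hθg
    have ht0 : 0 < t := lt_of_lt_of_le hε ht.1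
    have hct : 0 < c t := by
      have : 0 < t * ℓ + (1 - t) * d := by nlinarith [ht.2]
      exact div_pos this hl0
    have hLl : ℓ ≤ c t * ℓ / t := by
      rw [le_div_iff₀ ht0]
      have : c t * ℓ = t * ℓ + (1 - t) * d := div_mul_cancel₀ _ hl0.ne'
      rw [this]
      nlinarith [ht.2, hd.le]
    have hgmem : MapsTo (g t) (Icc (0:ℝ) ℓ) (Icc (0:ℝ) ℓ) := fun u hu =>
      ⟨le_min (div_nonneg (mul_nonneg hct.le hu.1) ht0.le) hl0.le, min_le_right _ _⟩
    have hgc : ContinuousOn (g t) (Icc (0:ℝ) ℓ) := by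
      show ContinuousOn (fun u => min (c t * u / t) ℓ) (Icc (0:ℝ) ℓ)
      exact (((continuous_const.mul continuous_id).div_const t).min continuous_const).continuousOn
    have hg0 : g t 0 = 0 := by
      show min (c t * 0 / t) ℓ = 0
      simp [hl0.le]
    have hgl : g t ℓ = ℓ := min_eq_right hLl
    -- the angle difference is an integer multiple of 2π at every point
    have hang : ∀ u ∈ Icc (0:ℝ) ℓ, ∃ k : ℤ, θt u - θg (g t u) = 2 * π * k := by
      intro u hu
      have h1 := hθt.2 u hu
      have h2 := hθg.2 (g t u) (hgmem hu)
      have hnorm : ‖v (g t u)‖ = 1 := hunit _ (hgmem hu)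
      rw [hnorm, inv_one, one_smul] at h2
      have e1 : ‖(fun t s => c t • v (g t s)) t u‖⁻¹ • (fun t s => c t • v (g t s)) t u
          = v (g t u) := by
        show ‖c t • v (g t u)‖⁻¹ • c t • v (g t u) = v (g t u)
        rw [norm_smul, hnorm, Real.norm_eq_abs, abs_of_pos hct, mul_one, smul_smul,
          inv_mul_cancel₀ hct.ne', one_smul]
      rw [e1, h2] at h1
      have hcos : Real.cos (θg (g t u)) = Real.cos (θt u) := by
        simpa [vec2] using congrArg (fun w : E2 => w 0) h1
      have hsin : Real.sin (θg (g t u)) = Real.sin (θt u) := by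
        simpa [vec2] using congrArg (fun w : E2 => w 1) h1
      exact Real.Angle.angle_eq_iff_two_pi_dvd_sub.mp
        (Real.Angle.cos_sin_inj hcos.symm hsin.symm)
    set h : ℝ → ℝ := fun u => θt u - θg (g t u) with hhdef
    have hhc : ContinuousOn h (Icc (0:ℝ) ℓ) := hθt.1.sub (hθg.1.comp hgc hgmem)
    obtain ⟨k0, hk0⟩ := hang 0 ⟨le_refl _, hl0.le⟩
    obtain ⟨kl, hkl⟩ := hang ℓ ⟨hl0.le, le_refl _⟩
    have hh0 : h 0 = 2 * π * k0 := by
      rw [hhdef]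
      simpa [hg0] using hk0
    have hhl : h ℓ = 2 * π * kl := by
      rw [hhdef]
      simpa [hgl] using hkl
    have hpi := Real.pi_pos
    have hkeq : k0 = kl := by
      by_contra hne
      rcases lt_or_gt_of_ne hne with hlt | hlt
      · have hcast : (k0:ℝ) + 1 ≤ (kl:ℝ) := by exact_mod_cast Int.add_one_le_iff.mpr hlt
        have hmem : (2*π*k0 + π) ∈ Icc (h 0) (h ℓ) := by
          rw [hh0, hhl]
          constructor <;> nlinarith
        obtain ⟨u, hu, hum⟩ := intermediate_value_Icc hl0.le hhc hmem
        obtain ⟨k, hk⟩ := hang u hu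
        have hueq : (2:ℝ) * π * k = 2*π*k0 + π := by
          rw [← hk]
          exact hum
        have h2 : (2:ℝ) * (k:ℝ) = 2*(k0:ℝ) + 1 :=
          mul_left_cancel₀ Real.pi_ne_zero (by linarith)
        have h3 : (2*k : ℤ) = 2*k0 + 1 := by exact_mod_cast h2
        omega
      · have hcast : (kl:ℝ) + 1 ≤ (k0:ℝ) := by exact_mod_cast Int.add_one_le_iff.mpr hlt
        have hmem : (2*π*kl + π) ∈ Icc (h ℓ) (h 0) := by
          rw [hh0, hhl]
          constructor <;> nlinarith
        obtain ⟨u, hu, hum⟩ := intermediate_value_Icc' hl0.le hhc hmem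
        obtain ⟨k, hk⟩ := hang u hu
        have hueq : (2:ℝ) * π * k = 2*π*kl + π := by
          rw [← hk]
          exact hum
        have h2 : (2:ℝ) * (k:ℝ) = 2*(kl:ℝ) + 1 :=
          mul_left_cancel₀ Real.pi_ne_zero (by linarith)
        have h3 : (2*k : ℤ) = 2*kl + 1 := by exact_mod_cast h2
        omega
    subst hkeq
    congr 1
    have e0 : θt 0 - θg 0 = 2*π*k0 := by simpa [hg0] using hk0
    have el : θt ℓ - θg ℓ = 2*π*k0 := by simpa [hgl] using hkl
    linarith
end
end
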